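/- Let (Ω, P) be a probability space, let x, y : ℕ → Ω → ℝ be sequences of measurable functions such that x_j, y_k and x_j·y_k are integrable for all j, k, and let ρ : ℕ → ℝ with ρ_j > 0 for all j. Assume that ∫_Ω ∑_{j,k} ρ_j⁻¹ ρ_k⁻¹ x_j² y_k² dP < ∞, ∫_Ω ∑_j ρ_j⁻¹ x_j² dP < ∞ and ∫_Ω ∑_k ρ_k⁻¹ y_k² dP < ∞. Then ∑_{j,k} ρ_j⁻¹ ρ_k⁻¹ (E[x_j y_k] − E[x_j] E[y_k])² < ∞. -/

import Mathlib

open MeasureTheory ENNReal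

lemma key_cs {Ω : Type*} [MeasurableSpace Ω] (P : Measure Ω) [IsProbabilityMeasure P]
    {f : Ω → ℝ} (hm : Measurable f) (hi : Integrable f P) :
    ENNReal.ofReal ((∫ ω, f ω ∂P) ^ 2) ≤ ∫⁻ ω, ENNReal.ofReal (f ω ^ 2) ∂P := by
  set g : Ω → ℝ≥0∞ := fun ω => ENNReal.ofReal |f ω| with hg
  have hgm : Measurable g := ENNReal.measurable_ofReal.comp hm.abs
  have h1 : (∫ ω, f ω ∂P) ^ 2 ≤ (∫ ω, |f ω| ∂P) ^ 2 := by
    rw [← sq_abs (∫ ω, f ω ∂P)]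
    have : |∫ ω, f ω ∂P| ≤ ∫ ω, |f ω| ∂P := by
      simpa [Real.norm_eq_abs] using norm_integral_le_integral_norm (μ := P) f
    exact pow_le_pow_left₀ (abs_nonneg _) this 2
  have h2 : ENNReal.ofReal ((∫ ω, |f ω| ∂P) ^ 2) = (∫⁻ ω, g ω ∂P) ^ 2 := by
    rw [ENNReal.ofReal_pow (integral_nonneg fun ω => abs_nonneg _),
      ofReal_integral_eq_lintegral_ofReal hi.abs (Filter.Eventually.of_forall fun ω => abs_nonneg _)]
  -- Cauchy-Schwarz: (∫⁻ g)^2 ≤ ∫⁻ g^2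
  have h3 : (∫⁻ ω, g ω ∂P) ^ 2 ≤ ∫⁻ ω, g ω ^ 2 ∂P := by
    have hpq : Real.HolderConjugate 2 2 := Real.holderConjugate_iff.2 ⟨one_lt_two, by norm_num⟩
    have := ENNReal.lintegral_mul_le_Lp_mul_Lq P hpq hgm.aemeasurable
      (aemeasurable_const (b := (1 : ℝ≥0∞)))
    simp only [Pi.mul_apply, mul_one, ENNReal.one_rpow, lintegral_const,
      measure_univ, one_mul] at this
    have hle : (∫⁻ ω, g ω ∂P) ≤ (∫⁻ ω, g ω ^ (2:ℝ) ∂P) ^ (1/(2:ℝ)) := by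
      simpa using this
    calc (∫⁻ ω, g ω ∂P) ^ 2 ≤ ((∫⁻ ω, g ω ^ (2:ℝ) ∂P) ^ (1/(2:ℝ))) ^ 2 := by gcongr
      _ = (∫⁻ ω, g ω ^ (2:ℝ) ∂P) ^ ((1/(2:ℝ)) * (2:ℝ)) := by
          rw [← ENNReal.rpow_natCast (_ ^ (1/(2:ℝ))) 2, ← ENNReal.rpow_mul]
          norm_num
      _ = ∫⁻ ω, g ω ^ 2 ∂P := by norm_num
  have h4 : ∫⁻ ω, g ω ^ 2 ∂P = ∫⁻ ω, ENNReal.ofReal (f ω ^ 2) ∂P := by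
    congr 1; ext ω
    rw [hg, ← ENNReal.ofReal_pow (abs_nonneg _), sq_abs]
  calc ENNReal.ofReal ((∫ ω, f ω ∂P) ^ 2) ≤ ENNReal.ofReal ((∫ ω, |f ω| ∂P) ^ 2) :=
        ENNReal.ofReal_le_ofReal h1
    _ = (∫⁻ ω, g ω ∂P) ^ 2 := h2
    _ ≤ ∫⁻ ω, g ω ^ 2 ∂P := h3
    _ = _ := h4

lemma aux_sum {Ω ι : Type*} [MeasurableSpace Ω] [Countable ι]
    (P : Measure Ω) [IsProbabilityMeasure P]
    (f : ι → Ω → ℝ) (hm : ∀ i, Measurable (f i)) (hi : ∀ i, Integrable (f i) P)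
    (w : ι → ℝ) (hw : ∀ i, 0 ≤ w i)
    (h : ∫⁻ ω, ∑' i, ENNReal.ofReal (w i * f i ω ^ 2) ∂P < ⊤) :
    ∑' i, ENNReal.ofReal (w i) * ENNReal.ofReal ((∫ ω, f i ω ∂P) ^ 2) < ⊤ := by
  have hmeas : ∀ i, Measurable fun ω => ENNReal.ofReal (w i * f i ω ^ 2) :=
    fun i => ENNReal.measurable_ofReal.comp (measurable_const.mul ((hm i).pow_const 2))
  calc ∑' i, ENNReal.ofReal (w i) * ENNReal.ofReal ((∫ ω, f i ω ∂P) ^ 2)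
      ≤ ∑' i, ENNReal.ofReal (w i) * ∫⁻ ω, ENNReal.ofReal (f i ω ^ 2) ∂P := by
        exact ENNReal.tsum_le_tsum fun i => mul_le_mul_right (key_cs P (hm i) (hi i)) _
    _ = ∑' i, ∫⁻ ω, ENNReal.ofReal (w i * f i ω ^ 2) ∂P := by
        refine tsum_congr fun i => ?_
        rw [← lintegral_const_mul _ (((hm i).pow_const 2).ennreal_ofReal)]
        exact lintegral_congr fun ω => by rw [← ENNReal.ofReal_mul (hw i)]
    _ = ∫⁻ ω, ∑' i, ENNReal.ofReal (w i * f i ω ^ 2) ∂P :=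
        (lintegral_tsum fun i => (hmeas i).aemeasurable).symm
    _ < ⊤ := h

/-- Theorem 1 (cross-covariance part), via Wahba's criterion: if
`E‖X ⊗ Y‖²_{H(K⊗K)} = ∫ ∑_{j,k} ρ_j⁻¹ ρ_k⁻¹ x_j² y_k² dP < ∞`,
`E‖X‖²_{H(K)} < ∞` and `E‖Y‖²_{H(K)} < ∞`, then the coefficient array
`Cov(x_j, y_k) = E[x_j y_k] − E[x_j] E[y_k]` of the cross-covariance function
satisfies `∑_{j,k} ρ_j⁻¹ ρ_k⁻¹ Cov(x_j, y_k)² < ∞`, i.e. `C_{XY} ∈ H(K⊗K)`. -/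
theorem crossCovariance_mem_tensor_RKHS
    {Ω : Type*} [MeasurableSpace Ω] (P : Measure Ω) [IsProbabilityMeasure P]
    (x y : ℕ → Ω → ℝ)
    (hxm : ∀ j, Measurable (x j)) (hym : ∀ k, Measurable (y k))
    (hxi : ∀ j, Integrable (x j) P) (hyi : ∀ k, Integrable (y k) P)
    (hxyi : ∀ j k, Integrable (fun ω => x j ω * y k ω) P)
    (ρ : ℕ → ℝ) (hρ : ∀ j, 0 < ρ j)
    (hXY : ∫⁻ ω, ∑' (j : ℕ) (k : ℕ),
        ENNReal.ofReal ((ρ j)⁻¹ * (ρ k)⁻¹ * (x j ω) ^ 2 * (y k ω) ^ 2) ∂P < ⊤)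
    (hX : ∫⁻ ω, ∑' (j : ℕ), ENNReal.ofReal ((ρ j)⁻¹ * (x j ω) ^ 2) ∂P < ⊤)
    (hY : ∫⁻ ω, ∑' (k : ℕ), ENNReal.ofReal ((ρ k)⁻¹ * (y k ω) ^ 2) ∂P < ⊤) :
    ∑' (j : ℕ) (k : ℕ),
        ENNReal.ofReal ((ρ j)⁻¹ * (ρ k)⁻¹ *
          ((∫ ω, x j ω * y k ω ∂P) - (∫ ω, x j ω ∂P) * (∫ ω, y k ω ∂P)) ^ 2) < ⊤ := by
  have hwnn : ∀ j, (0:ℝ) ≤ (ρ j)⁻¹ := fun j => inv_nonneg.2 (hρ j).le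
  set Ex : ℕ → ℝ := fun j => ∫ ω, x j ω ∂P with hEx
  set Ey : ℕ → ℝ := fun k => ∫ ω, y k ω ∂P with hEy
  set Exy : ℕ → ℕ → ℝ := fun j k => ∫ ω, x j ω * y k ω ∂P with hExy
  -- the three finiteness facts
  have L1 : ∑' (p : ℕ × ℕ), ENNReal.ofReal ((ρ p.1)⁻¹ * (ρ p.2)⁻¹) *
      ENNReal.ofReal ((Exy p.1 p.2) ^ 2) < ⊤ := by
    refine aux_sum (ι := ℕ × ℕ) P (fun p ω => x p.1 ω * y p.2 ω)
      (fun p => (hxm p.1).mul (hym p.2)) (fun p => hxyi p.1 p.2)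
      (fun p => (ρ p.1)⁻¹ * (ρ p.2)⁻¹)
      (fun p => mul_nonneg (hwnn p.1) (hwnn p.2)) ?_
    refine lt_of_le_of_lt (le_of_eq ?_) hXY
    refine lintegral_congr fun ω => ?_
    exact (ENNReal.tsum_prod
      (f := fun j k => ENNReal.ofReal ((ρ j)⁻¹ * (ρ k)⁻¹ * (x j ω * y k ω) ^ 2))).trans
      (tsum_congr fun j => tsum_congr fun k => by congr 1; ring)
  have L2 : ∑' j, ENNReal.ofReal ((ρ j)⁻¹) * ENNReal.ofReal ((Ex j) ^ 2) < ⊤ :=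
    aux_sum P x hxm hxi _ hwnn hX
  have L3 : ∑' k, ENNReal.ofReal ((ρ k)⁻¹) * ENNReal.ofReal ((Ey k) ^ 2) < ⊤ :=
    aux_sum P y hym hyi _ hwnn hY
  -- pointwise bound
  have hbound : ∀ j k, ENNReal.ofReal ((ρ j)⁻¹ * (ρ k)⁻¹ * (Exy j k - Ex j * Ey k) ^ 2) ≤
      2 * (ENNReal.ofReal ((ρ j)⁻¹ * (ρ k)⁻¹) * ENNReal.ofReal ((Exy j k) ^ 2)) +
      2 * ((ENNReal.ofReal ((ρ j)⁻¹) * ENNReal.ofReal ((Ex j) ^ 2)) *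
           (ENNReal.ofReal ((ρ k)⁻¹) * ENNReal.ofReal ((Ey k) ^ 2))) := by
    intro j k
    have hc : (Exy j k - Ex j * Ey k) ^ 2 ≤ 2 * (Exy j k) ^ 2 + 2 * (Ex j * Ey k) ^ 2 := by
      nlinarith [sq_nonneg (Exy j k + Ex j * Ey k)]
    have hre : (ρ j)⁻¹ * (ρ k)⁻¹ * (Exy j k - Ex j * Ey k) ^ 2 ≤
        2 * ((ρ j)⁻¹ * (ρ k)⁻¹ * (Exy j k) ^ 2) +
        2 * (((ρ j)⁻¹ * (Ex j) ^ 2) * ((ρ k)⁻¹ * (Ey k) ^ 2)) := by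
      have := mul_le_mul_of_nonneg_left hc (mul_nonneg (hwnn j) (hwnn k))
      nlinarith [this]
    calc ENNReal.ofReal ((ρ j)⁻¹ * (ρ k)⁻¹ * (Exy j k - Ex j * Ey k) ^ 2)
        ≤ ENNReal.ofReal (2 * ((ρ j)⁻¹ * (ρ k)⁻¹ * (Exy j k) ^ 2) +
            2 * (((ρ j)⁻¹ * (Ex j) ^ 2) * ((ρ k)⁻¹ * (Ey k) ^ 2))) :=
          ENNReal.ofReal_le_ofReal hre
      _ = ENNReal.ofReal (2 * ((ρ j)⁻¹ * (ρ k)⁻¹ * (Exy j k) ^ 2)) +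
          ENNReal.ofReal (2 * (((ρ j)⁻¹ * (Ex j) ^ 2) * ((ρ k)⁻¹ * (Ey k) ^ 2))) := by
          rw [ENNReal.ofReal_add (mul_nonneg (by norm_num)
            (mul_nonneg (mul_nonneg (hwnn j) (hwnn k)) (sq_nonneg _)))
            (mul_nonneg (by norm_num) (mul_nonneg
              (mul_nonneg (hwnn j) (sq_nonneg _)) (mul_nonneg (hwnn k) (sq_nonneg _))))]
      _ = 2 * (ENNReal.ofReal ((ρ j)⁻¹ * (ρ k)⁻¹) * ENNReal.ofReal ((Exy j k) ^ 2)) +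
          2 * ((ENNReal.ofReal ((ρ j)⁻¹) * ENNReal.ofReal ((Ex j) ^ 2)) *
               (ENNReal.ofReal ((ρ k)⁻¹) * ENNReal.ofReal ((Ey k) ^ 2))) := by
          rw [ENNReal.ofReal_mul (by norm_num : (0:ℝ) ≤ 2),
            ENNReal.ofReal_mul (by norm_num : (0:ℝ) ≤ 2),
            ENNReal.ofReal_mul (mul_nonneg (hwnn j) (hwnn k)),
            ENNReal.ofReal_mul (mul_nonneg (hwnn j) (sq_nonneg _)),
            ENNReal.ofReal_mul (hwnn j), ENNReal.ofReal_mul (hwnn k),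
            ENNReal.ofReal_mul (hwnn j)]
          norm_num
  calc ∑' (j : ℕ) (k : ℕ), ENNReal.ofReal ((ρ j)⁻¹ * (ρ k)⁻¹ *
          (Exy j k - Ex j * Ey k) ^ 2)
      ≤ ∑' (j : ℕ) (k : ℕ),
          (2 * (ENNReal.ofReal ((ρ j)⁻¹ * (ρ k)⁻¹) * ENNReal.ofReal ((Exy j k) ^ 2)) +
           2 * ((ENNReal.ofReal ((ρ j)⁻¹) * ENNReal.ofReal ((Ex j) ^ 2)) *
                (ENNReal.ofReal ((ρ k)⁻¹) * ENNReal.ofReal ((Ey k) ^ 2)))) :=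
        ENNReal.tsum_le_tsum fun j => ENNReal.tsum_le_tsum fun k => hbound j k
    _ = 2 * (∑' (j : ℕ) (k : ℕ),
            ENNReal.ofReal ((ρ j)⁻¹ * (ρ k)⁻¹) * ENNReal.ofReal ((Exy j k) ^ 2)) +
        2 * ((∑' j, ENNReal.ofReal ((ρ j)⁻¹) * ENNReal.ofReal ((Ex j) ^ 2)) *
             (∑' k, ENNReal.ofReal ((ρ k)⁻¹) * ENNReal.ofReal ((Ey k) ^ 2))) := by
        simp only [ENNReal.tsum_add, ENNReal.tsum_mul_left, ENNReal.tsum_mul_right]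
    _ < ⊤ := by
        rw [← ENNReal.tsum_prod]
        exact ENNReal.add_lt_top.2 ⟨ENNReal.mul_lt_top (by norm_num) L1,
          ENNReal.mul_lt_top (by norm_num) (ENNReal.mul_lt_top L2 L3)⟩
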